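/- Let g_1, ..., g_n be linearly independent vectors in Z^n generating a simplicial cone C over R_{≥0}, and let Z^o = {Σ c_i g_i : 0 ≤ c_i < 1} be the fundamental parallelepiped. Then the set (Z^o ∩ Z^n) ∪ {g_1, ..., g_n} generates the monoid C ∩ Z^n over Z_{≥0}. -/

import Mathlib

/-- If `g 0, …, g (n-1)` are linearly independent integral vectors generating a
simplicial cone `C` over `ℝ≥0`, with fundamental parallelepiped
`Z° = {Σ cᵢ gᵢ : 0 ≤ cᵢ < 1}`, then the lattice points of `Z°` together with the
`gᵢ` generate the monoid `C ∩ ℤⁿ` over `ℤ≥0`. -/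
theorem parallelepiped_generates_monoid (n : ℕ) (g : Fin n → Fin n → ℤ)
    (hli : LinearIndependent ℝ (fun i => (fun j => (g i j : ℝ))))
    (C : Set (Fin n → ℝ))
    (hC : C = {x | ∃ c : Fin n → ℝ, (∀ i, 0 ≤ c i) ∧
      x = ∑ i, c i • (fun j => (g i j : ℝ))})
    (Zo : Set (Fin n → ℤ))
    (hZo : Zo = {s | ∃ c : Fin n → ℝ, (∀ i, 0 ≤ c i ∧ c i < 1) ∧
      (fun j => (s j : ℝ)) = ∑ i, c i • (fun j => (g i j : ℝ))}) :
    (AddSubmonoid.closure (Zo ∪ Set.range g) : Set (Fin n → ℤ)) =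
      {s : Fin n → ℤ | (fun j => (s j : ℝ)) ∈ C} := by
  subst hC hZo
  apply Set.Subset.antisymm
  · intro s hs
    induction hs using AddSubmonoid.closure_induction with
    | mem x hx =>
      rcases hx with hx | ⟨i, rfl⟩
      · obtain ⟨c, hc, hsum⟩ := hx
        exact ⟨c, fun i => (hc i).1, hsum⟩
      · refine ⟨fun k => if k = i then 1 else 0,
          fun k => by dsimp only; split <;> norm_num, ?_⟩
        simp [ite_smul]
    | zero => exact ⟨0, fun i => le_refl 0, by funext j; simp⟩
    | add x y hx hy ihx ihy =>
      obtain ⟨c, hc, hce⟩ := ihx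
      obtain ⟨d, hd, hde⟩ := ihy
      refine ⟨c + d, fun i => add_nonneg (hc i) (hd i), ?_⟩
      funext j
      have hx := congrFun hce j
      have hy := congrFun hde j
      simp only [Finset.sum_apply, Pi.smul_apply, smul_eq_mul, Pi.add_apply] at hx hy ⊢
      push_cast
      rw [hx, hy, ← Finset.sum_add_distrib]
      exact Finset.sum_congr rfl fun i _ => by ring
  · rintro s ⟨c, hc, hsum⟩
    have key : ∀ j, (s j : ℝ) = ∑ i, c i * (g i j : ℝ) := fun j => by
      simpa [Finset.sum_apply] using congrFun hsum j
    set m : Fin n → ℕ := fun i => (⌊c i⌋).toNat with hm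
    have hmc : ∀ i, ((m i : ℤ) : ℝ) = (⌊c i⌋ : ℝ) := fun i => by
      rw [hm]; push_cast [Int.toNat_of_nonneg (Int.floor_nonneg.mpr (hc i))]; ring
    set s' : Fin n → ℤ := s - ∑ i, m i • g i with hs'
    have hs'mem : s' ∈ {s | ∃ c : Fin n → ℝ, (∀ i, 0 ≤ c i ∧ c i < 1) ∧
        (fun j => (s j : ℝ)) = ∑ i, c i • (fun j => (g i j : ℝ))} := by
      refine ⟨fun i => Int.fract (c i),
        fun i => ⟨Int.fract_nonneg _, Int.fract_lt_one _⟩, ?_⟩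
      funext j
      simp only [Finset.sum_apply, Pi.smul_apply, smul_eq_mul, hs',
        Pi.sub_apply]
      push_cast
      rw [key j]
      rw [← Finset.sum_sub_distrib]
      refine Finset.sum_congr rfl fun i _ => ?_
      have := hmc i
      push_cast at this
      push_cast [nsmul_eq_mul]
      rw [this, Int.fract]
      ring
    have hrepr : s = s' + ∑ i, m i • g i := by rw [hs']; abel
    rw [hrepr, SetLike.mem_coe]
    refine AddSubmonoid.add_mem _
      (AddSubmonoid.subset_closure (Set.mem_union_left _ hs'mem)) ?_
    refine AddSubmonoid.sum_mem _ fun i _ => ?_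
    exact nsmul_mem
      (AddSubmonoid.subset_closure (Set.mem_union_right _ (Set.mem_range_self i))) (m i)
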